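/- Any non-trivial left-orderable quandle is infinite; in particular, finite non-trivial quandles are not left-orderable. -/
import Mathlib


/-- A quandle: a set with a binary operation `act` (written `x * y`), a dual operation
`inv` (written `x *⁻¹ y`), satisfying idempotency, right-invertibility
(`(x*y) *⁻¹ y = (x *⁻¹ y) * y = x`) and self-distributivity. -/
structure Quandle' (Q : Type u) where
  act : Q → Q → Q
  inv : Q → Q → Q
  idem : ∀ x : Q, act x x = x
  act_inv : ∀ x y : Q, inv (act x y) y = x
  inv_act : ∀ x y : Q, act (inv x y) y = x
  distrib : ∀ x y z : Q, act (act x y) z = act (act x z) (act y z)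

/-- A left-order on a quandle: a strict linear order `r` such that `x < y` implies
`z * x < z * y` for all `z`. -/
def Quandle'.IsLeftOrder {Q : Type u} (q : Quandle' Q) (r : Q → Q → Prop) : Prop :=
  IsStrictTotalOrder Q r ∧ ∀ x y z : Q, r x y → r (q.act z x) (q.act z y)

/-- An involutory quandle: `(x*y)*y = x` for all `x, y`. -/
def Quandle'.Involutory {Q : Type u} (q : Quandle' Q) : Prop :=
  ∀ x y : Q, q.act (q.act x y) y = x

/-- any non-trivial left-orderable quandle is infinite; in particular a
finite non-trivial quandle is not left-orderable. -/
theorem stmt_8 {Q : Type u} (q : Quandle' Q)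
    (hnontriv : ¬ ∀ x y : Q, q.act x y = x)
    (horder : ∃ r : Q → Q → Prop, q.IsLeftOrder r) :
    Infinite Q := by
  rw [← not_finite_iff_infinite]
  intro hfin
  obtain ⟨r, hsto, hmono⟩ := horder
  haveI := hsto
  haveI : DecidableRel r := Classical.decRel r
  letI : LinearOrder Q := linearOrderOfSTO r
  haveI : WellFoundedLT Q := Finite.to_wellFoundedLT
  haveI : WellFoundedGT Q := Finite.to_wellFoundedGT
  have hlt : ∀ x y : Q, x < y ↔ r x y := fun _ _ => Iff.rfl
  -- each left translation is strictly monotone, hence the identity on a finite order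
  have hid : ∀ z x : Q, q.act z x = x := by
    intro z x
    have hsm : StrictMono (fun x => q.act z x) := fun a b h => hmono a b z h
    exact le_antisymm hsm.apply_le hsm.le_apply
  -- then Q is a subsingleton, contradicting nontriviality
  have hsub : ∀ x y : Q, x = y := by
    intro x y
    have h1 : q.inv x x = x := by
      have := q.act_inv x x
      rwa [q.idem] at this
    have h2 : q.inv x x = y := by
      have := q.act_inv y x
      rwa [hid y x] at this
    rw [← h1, h2]
  exact hnontriv fun x y => (hsub (q.act x y) x)
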